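/- For any n-agent instance with monotone valuations, for any integer c with 1 ≤ c ≤ n, and any optimal action sequence π̃, the following holds: let S̃ be the subsequence of π̃ consisting of the c agents with the c highest values v_i(π̃^i). Then any action subsequence S of length c maximizing ∑_{i∈S} v_i(S^i) over all c-agent subsequences satisfies ∑_{i∈S} v_i(S^i) ≥ (c/n)·SW(π̃). Consequently, any full sequence π extending S as a prefix has SW(π) ≥ (c/n)·SW(π̃), so the algorithm Det achieves approximation ratio n/c. -/

import Mathlib

/-- The agents that precede `i` in the action (sub)sequence `π`. -/
def prefixBefore {n : ℕ} (π : List (Fin n)) (i : Fin n) : List (Fin n) :=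
  π.takeWhile (fun j => j != i)

/-- A full action sequence: an ordering of all `n` agents. -/
def IsSeq {n : ℕ} (π : List (Fin n)) : Prop :=
  π.Nodup ∧ ∀ i : Fin n, i ∈ π

/-- Social welfare of a full action sequence. -/
noncomputable def SW {n : ℕ} (v : Fin n → List (Fin n) → ℝ) (π : List (Fin n)) : ℝ :=
  ∑ i : Fin n, v i (prefixBefore π i)

/-- Total value obtained by the agents of a subsequence acting in order. -/
noncomputable def valSum {n : ℕ} (v : Fin n → List (Fin n) → ℝ) (S : List (Fin n)) : ℝ :=
  (S.map fun i => v i (prefixBefore S i)).sum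

lemma takeWhile_sublist_of_mem {n : ℕ} (i : Fin n) :
    ∀ {S π : List (Fin n)}, S.Sublist π → π.Nodup → i ∈ S →
      (S.takeWhile (fun j => j != i)).Sublist (π.takeWhile (fun j => j != i)) := by
  intro S π h
  induction h with
  | slnil => intro _ h; simp at h
  | cons a h ih =>
      intro hnd hmem
      rename_i S' π'
      by_cases hai : a = i
      · exact absurd (h.subset hmem) (by simpa [hai] using (List.nodup_cons.mp hnd).1)
      · have : (a != i) = true := by simpa using hai
        rw [List.takeWhile_cons, this]
        exact (ih (List.nodup_cons.mp hnd).2 hmem).trans (List.sublist_cons_self _ _)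
  | cons_cons a h ih =>
      intro hnd hmem
      rename_i S' π'
      by_cases hai : a = i
      · have : (a != i) = false := by simpa using hai
        simp [List.takeWhile_cons, this]
      · have hb : (a != i) = true := by simpa using hai
        have hmem' : i ∈ S' := by
          rcases List.mem_cons.mp hmem with h1 | h1
          · exact absurd h1.symm hai
          · exact h1
        rw [List.takeWhile_cons, hb, List.takeWhile_cons, hb]
        exact (ih (List.nodup_cons.mp hnd).2 hmem').cons_cons a

lemma takeWhile_append_of_mem {n : ℕ} (i : Fin n) :
    ∀ (S T : List (Fin n)), i ∈ S →
      (S ++ T).takeWhile (fun j => j != i) = S.takeWhile (fun j => j != i) := by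
  intro S T
  induction S with
  | nil => intro h; simp at h
  | cons a S' ih =>
      intro hmem
      by_cases hai : a = i
      · have : (a != i) = false := by simpa using hai
        simp [List.takeWhile_cons, this]
      · have hb : (a != i) = true := by simpa using hai
        have hmem' : i ∈ S' := by
          rcases List.mem_cons.mp hmem with h1 | h1
          · exact absurd h1.symm hai
          · exact h1
        simp only [List.cons_append, List.takeWhile_cons, hb]
        rw [ih hmem']

lemma exists_top_subset {n c : ℕ} (hc1 : 1 ≤ c) (hcn : c ≤ n) (f : Fin n → ℝ)
    (hnn : ∀ i, 0 ≤ f i) :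
    ∃ A : Finset (Fin n), A.card = c ∧ (c : ℝ) / n * (∑ i, f i) ≤ ∑ i ∈ A, f i := by
  have hn0 : 0 < n := lt_of_lt_of_le hc1 hcn
  -- the set of card-c subsets is nonempty
  obtain ⟨A0, _, hA0c⟩ := Finset.exists_subset_card_eq (by simpa using hcn :
      c ≤ (Finset.univ : Finset (Fin n)).card)
  -- pick a maximizer
  have hne : (Finset.univ.powersetCard c (α := Fin n)).Nonempty :=
    ⟨A0, Finset.mem_powersetCard.mpr ⟨Finset.subset_univ _, hA0c⟩⟩
  obtain ⟨A, hA, hAmax⟩ := Finset.exists_max_image _ (fun A => ∑ i ∈ A, f i) hne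
  have hAcard : A.card = c := (Finset.mem_powersetCard.mp hA).2
  refine ⟨A, hAcard, ?_⟩
  -- swap inequality
  have hswap : ∀ i ∉ A, ∀ j ∈ A, f i ≤ f j := by
    intro i hi j hj
    have hij : i ≠ j := fun h => hi (h ▸ hj)
    set A' := insert i (A.erase j) with hA'
    have hiA' : i ∉ A.erase j := fun h => hi (Finset.mem_of_mem_erase h)
    have hA'card : A'.card = c := by
      rw [hA', Finset.card_insert_of_notMem hiA', Finset.card_erase_of_mem hj, hAcard]
      omega
    have hle : ∑ x ∈ A', f x ≤ ∑ x ∈ A, f x := by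
      apply hAmax
      exact Finset.mem_powersetCard.mpr ⟨Finset.subset_univ _, hA'card⟩
    have h1 : ∑ x ∈ A', f x = f i + ∑ x ∈ A.erase j, f x :=
      Finset.sum_insert hiA'
    have h2 : ∑ x ∈ A.erase j, f x + f j = ∑ x ∈ A, f x :=
      Finset.sum_erase_add _ _ hj
    linarith
  -- counting
  have hcompl : (Aᶜ : Finset (Fin n)).card = n - c := by
    rw [Finset.card_compl, hAcard, Fintype.card_fin]
  have hkey : (c : ℝ) * ∑ i ∈ Aᶜ, f i ≤ ((n : ℝ) - c) * ∑ i ∈ A, f i := by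
    have := Finset.sum_le_sum (s := Aᶜ)
      (f := fun i => ∑ _j ∈ A, f i) (g := fun i => ∑ j ∈ A, f j)
      (fun i hi => Finset.sum_le_sum (fun j hj => hswap i (by simpa using hi) j hj))
    simp only [Finset.sum_const, hAcard, nsmul_eq_mul] at this
    calc (c : ℝ) * ∑ i ∈ Aᶜ, f i = ∑ i ∈ Aᶜ, (c : ℝ) * f i := by rw [Finset.mul_sum]
      _ ≤ (Aᶜ.card : ℝ) * ∑ j ∈ A, f j := this
      _ = ((n : ℝ) - c) * ∑ j ∈ A, f j := by
          rw [hcompl, Nat.cast_sub hcn]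
  have hsplit : ∑ i, f i = ∑ i ∈ A, f i + ∑ i ∈ Aᶜ, f i :=
    (Finset.sum_add_sum_compl A f).symm
  rw [div_mul_eq_mul_div, div_le_iff₀ (by positivity)]
  have : (c : ℝ) ≤ n := by exact_mod_cast hcn
  nlinarith [Finset.sum_le_sum (fun i (_ : i ∈ A) => hnn i)]

theorem stmt0 {n c : ℕ} (hc1 : 1 ≤ c) (hcn : c ≤ n)
    (v : Fin n → List (Fin n) → ℝ)
    (hnn : ∀ i S, 0 ≤ v i S)
    (hmono : ∀ (i : Fin n) (S S' : List (Fin n)), S'.Sublist S → v i S ≤ v i S')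
    (πopt : List (Fin n)) (hseq : IsSeq πopt)
    (hopt : ∀ σ, IsSeq σ → SW v σ ≤ SW v πopt)
    (S : List (Fin n)) (hSnd : S.Nodup) (hSlen : S.length = c)
    (hmax : ∀ T : List (Fin n), T.Nodup → T.length = c → valSum v T ≤ valSum v S) :
    (c : ℝ) / n * SW v πopt ≤ valSum v S ∧
      ∀ π, IsSeq π → S <+: π → (c : ℝ) / n * SW v πopt ≤ SW v π := by
  set f : Fin n → ℝ := fun i => v i (prefixBefore πopt i) with hf
  obtain ⟨A, hAcard, hAbound⟩ := exists_top_subset hc1 hcn f (fun i => hnn _ _)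
  set T : List (Fin n) := πopt.filter (fun j => decide (j ∈ A)) with hT
  have hTsub : T.Sublist πopt := List.filter_sublist
  have hTnd : T.Nodup := hseq.1.sublist hTsub
  have hTfin : T.toFinset = A := by
    ext x
    simp only [hT, List.mem_toFinset, List.mem_filter, decide_eq_true_eq]
    exact ⟨fun h => h.2, fun h => ⟨hseq.2 x, h⟩⟩
  have hTlen : T.length = c := by
    rw [← List.toFinset_card_of_nodup hTnd, hTfin, hAcard]
  -- valSum v T ≥ ∑_{i ∈ A} f i
  have hstep : ∑ i ∈ A, f i ≤ valSum v T := by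
    have h1 : (T.map f).sum ≤ (T.map fun i => v i (prefixBefore T i)).sum := by
      apply List.sum_le_sum
      intro i hi
      exact hmono i (prefixBefore πopt i) (prefixBefore T i)
        (takeWhile_sublist_of_mem i hTsub hseq.1 hi)
    have h2 : (T.map f).sum = ∑ i ∈ A, f i := by
      rw [← hTfin, List.sum_toFinset f hTnd]
    rw [← h2]; exact h1
  have hmain : (c : ℝ) / n * SW v πopt ≤ valSum v S := by
    have : valSum v T ≤ valSum v S := hmax T hTnd hTlen
    have hSW : SW v πopt = ∑ i, f i := rfl
    rw [hSW]
    linarith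
  refine ⟨hmain, ?_⟩
  intro π hπ hpref
  refine hmain.trans ?_
  -- valSum v S ≤ SW v π
  obtain ⟨t, rfl⟩ := hpref
  have hless : valSum v S = ∑ i ∈ S.toFinset, v i (prefixBefore (S ++ t) i) := by
    unfold valSum
    rw [← List.sum_toFinset _ hSnd]
    apply Finset.sum_congr rfl
    intro i hi
    have hiS : i ∈ S := List.mem_toFinset.mp hi
    unfold prefixBefore
    rw [takeWhile_append_of_mem i S t hiS]
  rw [hless]
  unfold SW
  apply Finset.sum_le_sum_of_subset_of_nonneg (Finset.subset_univ _)
  intro i _ _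
  exact hnn _ _
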